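/- Let x* ∈ ℝ^E with x* ≥ 0 satisfy all rank inequalities x*(F) ≤ r(F) for nonempty F ⊆ E. If for some F ⊆ E with c_p < r(F) < c_{p+1} (for some p ∈ {1, …, m−1}) the rank induced forbidden set inequality is violated by x*, i.e., (c_{p+1} − r(F))·x*(F) − (r(F) − c_p)·x*(E∖F) > c_p·(c_{p+1} − r(F)), then c_p < x*(E) < c_{p+1}. -/
import Mathlib


open Finset

/-- A (loopless) matroid on a finite ground set, given by its independent sets. -/
structure FinMatroid (α : Type*) [Fintype α] [DecidableEq α] where
  Indep : Finset α → Prop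
  empty_indep : Indep ∅
  subset_indep : ∀ ⦃I J : Finset α⦄, Indep J → I ⊆ J → Indep I
  exchange : ∀ ⦃I J : Finset α⦄, Indep I → Indep J → I.card < J.card →
    ∃ e ∈ J \ I, Indep (insert e I)
  loopless : ∀ e : α, Indep {e}

variable {α : Type*} [Fintype α] [DecidableEq α]

open Classical in
/-- The rank of a set: the maximum cardinality of an independent subset. -/
noncomputable def FinMatroid.r (M : FinMatroid α) (F : Finset α) : ℕ :=
  (F.powerset.filter M.Indep).sup Finset.card

/-- incidence vector -/
noncomputable def incVec (I : Finset α) : α → ℝ := fun e => if e ∈ I then 1 else 0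

/-- x(S) = ∑_{e ∈ S} x_e -/
noncomputable def fsum (x : α → ℝ) (S : Finset α) : ℝ := ∑ e ∈ S, x e

/-- closed set -/
def FinMatroid.ClosedSet (M : FinMatroid α) (F : Finset α) : Prop :=
  ∀ e ∉ F, M.r F < M.r (insert e F)

/-- F is separable -/
def FinMatroid.Separable (M : FinMatroid α) (F : Finset α) : Prop :=
  ∃ F₁ F₂ : Finset α, F₁ ≠ ∅ ∧ F₂ ≠ ∅ ∧ Disjoint F₁ F₂ ∧ F₁ ∪ F₂ = F ∧
    M.r F₁ + M.r F₂ ≤ M.r F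

def FinMatroid.Inseparable (M : FinMatroid α) (F : Finset α) : Prop :=
  ¬ M.Separable F

/-- the k-rank r^k(F) = k - r(E \ F), as an integer -/
noncomputable def FinMatroid.krank (M : FinMatroid α) (k : ℕ) (F : Finset α) : ℤ :=
  (k : ℤ) - (M.r Fᶜ : ℤ)

/-- F is k-separable -/
noncomputable def FinMatroid.kSeparable (M : FinMatroid α) (k : ℕ) (F : Finset α) : Prop :=
  ∃ F₁ F₂ : Finset α, F₁ ≠ ∅ ∧ F₂ ≠ ∅ ∧ Disjoint F₁ F₂ ∧ F₁ ∪ F₂ = F ∧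
    M.krank k F₁ + M.krank k F₂ = M.krank k F

noncomputable def FinMatroid.kInseparable (M : FinMatroid α) (k : ℕ) (F : Finset α) : Prop :=
  ¬ M.kSeparable k F

/-- convex hull of incidence vectors of independent sets of cardinality exactly k -/
noncomputable def exactPolytope (M : FinMatroid α) (k : ℕ) : Set (α → ℝ) :=
  convexHull ℝ {x | ∃ I : Finset α, M.Indep I ∧ I.card = k ∧ x = incVec I}

/-- the cardinality constrained matroid polytope P^c(E) -/
noncomputable def cardPolytope (M : FinMatroid α) {m : ℕ} (c : Fin m → ℕ) : Set (α → ℝ) :=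
  convexHull ℝ {x | ∃ I : Finset α, M.Indep I ∧ (∃ p : Fin m, I.card = c p) ∧ x = incVec I}

/-- dimension of (the affine hull of) a subset of ℝ^E -/
noncomputable def polyDim (s : Set (α → ℝ)) : ℕ :=
  Module.finrank ℝ (affineSpan ℝ s).direction

/-- `a · x ≤ a₀` defines a facet of `P` -/
noncomputable def IsFacet (P : Set (α → ℝ)) (a : α → ℝ) (a₀ : ℝ) : Prop :=
  (∀ x ∈ P, ∑ e, a e * x e ≤ a₀) ∧
  polyDim {x ∈ P | ∑ e, a e * x e = a₀} + 1 = polyDim P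


/-- a violated forbidden set inequality forces
c_p < x*(E) < c_(p+1). -/
theorem violation_forces_cardinality_window {α : Type*} [Fintype α] [DecidableEq α]
    (M : FinMatroid α)
    {m : ℕ} (c : Fin m → ℕ) (hm : 2 ≤ m) (hmono : StrictMono c)
    (hlast : c ⟨m - 1, by omega⟩ ≤ M.r Finset.univ)
    (x : α → ℝ) (hnn : ∀ e : α, 0 ≤ x e)
    (hrank : ∀ F : Finset α, F ≠ ∅ → fsum x F ≤ (M.r F : ℝ))
    (F : Finset α) (p : Fin m) (hp : p.val + 1 < m)
    (h1 : c p < M.r F) (h2 : M.r F < c ⟨p.val + 1, hp⟩)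
    (hviol : (c p : ℝ) * ((c ⟨p.val + 1, hp⟩ : ℝ) - M.r F) < ((c ⟨p.val + 1, hp⟩ : ℝ) - M.r F) * fsum x F - ((M.r F : ℝ) - c p) * fsum x Fᶜ) :
    (c p : ℝ) < fsum x Finset.univ ∧ fsum x Finset.univ < (c ⟨p.val + 1, hp⟩ : ℝ) := by
  classical
  have hFne : F ≠ ∅ := by
    rintro rfl
    have : M.r (∅ : Finset α) = 0 := by
      simp [FinMatroid.r]
    omega
  have hxF : fsum x F ≤ (M.r F : ℝ) := hrank F hFne
  have hxFc : 0 ≤ fsum x Fᶜ := Finset.sum_nonneg fun e _ => hnn e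
  have hxFnn : 0 ≤ fsum x F := Finset.sum_nonneg fun e _ => hnn e
  have hsplit : fsum x Finset.univ = fsum x F + fsum x Fᶜ := by
    rw [fsum, fsum, fsum, ← Finset.sum_union (disjoint_compl_right)]
    congr 1
    simp
  have ha : (0 : ℝ) < (c ⟨p.val + 1, hp⟩ : ℝ) - M.r F := by
    have : (M.r F : ℝ) < (c ⟨p.val + 1, hp⟩ : ℝ) := by exact_mod_cast h2
    linarith
  have hb : (0 : ℝ) < (M.r F : ℝ) - c p := by
    have : (c p : ℝ) < (M.r F : ℝ) := by exact_mod_cast h1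
    linarith
  constructor
  · -- c p < x(F) ≤ x(E)
    have hxFgt : (c p : ℝ) < fsum x F := by nlinarith
    linarith [hsplit]
  · have hxFclt : fsum x Fᶜ < (c ⟨p.val + 1, hp⟩ : ℝ) - M.r F := by nlinarith
    linarith [hsplit]
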